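/- The number of downward closed subsets of ℕ₀^d of cardinality exactly n is at most 2^{nd}. -/

import Mathlib

def DownwardClosed {d : ℕ} (Λ : Finset (Fin d → ℕ)) : Prop :=
  ∀ ν ∈ Λ, ∀ μ : Fin d → ℕ, μ ≤ ν → μ ∈ Λ

namespace DCAux

variable {d n : ℕ}

noncomputable instance (d : ℕ) : LinearOrder (Lex (Fin d → ℕ)) :=
  haveI : WellFoundedLT (Fin d) := inferInstance
  inferInstance

/-- Filtered-below cardinality equals the index, for the order iso of a finset. -/
lemma card_filter_lt_orderIso {α : Type*} [LinearOrder α] (s : Finset α) {n : ℕ}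
    (h : s.card = n) (k : Fin n) :
    (s.filter (fun a => a < (s.orderIsoOfFin h k : α))).card = (k : ℕ) := by
  classical
  set e := s.orderIsoOfFin h with he
  have himg : s.filter (fun a => a < (e k : α)) = (Finset.Iio k).image (fun i => (e i : α)) := by
    ext a
    simp only [Finset.mem_filter, Finset.mem_image, Finset.mem_Iio]
    constructor
    · rintro ⟨ha, hlt⟩
      refine ⟨e.symm ⟨a, ha⟩, ?_, by simp⟩
      have : e (e.symm ⟨a, ha⟩) < e k := by
        rw [e.apply_symm_apply]
        exact Subtype.mk_lt_mk.mpr hlt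
      exact e.lt_iff_lt.mp this
    · rintro ⟨i, hik, rfl⟩
      exact ⟨(e i).2, Subtype.coe_lt_coe.mpr (e.lt_iff_lt.mpr hik)⟩
  have hinj : Function.Injective (fun i : Fin n => (e i : α)) := fun a b hab =>
    e.injective (Subtype.coe_injective hab)
  rw [himg, Finset.card_image_of_injective _ hinj, Fin.card_Iio]

/-- The encoding: element number `i` of `Λ` (in lex order) gets `d` bits recording whether
`ν + e_j ∈ Λ`. -/
noncomputable def enc (d n : ℕ) (Λ : {Λ : Finset (Fin d → ℕ) // DownwardClosed Λ ∧ Λ.card = n}) :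
    Fin n → Fin d → Bool := fun i j => by
  classical
  exact decide
    ((ofLex (((Λ.1.map (toLex : (Fin d → ℕ) ≃ Lex (Fin d → ℕ)).toEmbedding).orderIsoOfFin
      (by rw [Finset.card_map]; exact Λ.2.2) i : Lex (Fin d → ℕ))) + Pi.single j 1) ∈ Λ.1)

lemma key (Λ Λ' : {Λ : Finset (Fin d → ℕ) // DownwardClosed Λ ∧ Λ.card = n})
    (hE : enc d n Λ = enc d n Λ') (x : Fin d → ℕ) (hx : x ∈ Λ.1)
    (hmin : ∀ y : Fin d → ℕ, toLex y < toLex x → (y ∈ Λ.1 ↔ y ∈ Λ'.1)) : x ∈ Λ'.1 := by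
  classical
  haveI : WellFoundedLT (Fin d) := inferInstance
  by_cases hx0 : x = 0
  · subst hx0
    have hpos : 0 < Λ'.1.card := by
      rw [Λ'.2.2, ← Λ.2.2]
      exact Finset.card_pos.mpr ⟨_, hx⟩
    obtain ⟨y, hy⟩ := Finset.card_pos.mp hpos
    exact Λ'.2.1 y hy 0 (fun i => Nat.zero_le _)
  · obtain ⟨j, hj⟩ : ∃ j, x j ≠ 0 := by
      by_contra h
      push_neg at h
      exact hx0 (funext h)
    set μ : Fin d → ℕ := fun i => if i = j then x j - 1 else x i with hμ
    have hμx : μ + Pi.single j 1 = x := by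
      funext i
      by_cases h : i = j
      · subst h; simp [hμ]; omega
      · simp [hμ, h, Pi.single_eq_of_ne h]
    have hle : μ ≤ x := by
      intro i
      by_cases h : i = j
      · subst h; simp [hμ]
      · simp [hμ, h]
    have hne : μ ≠ x := by
      intro h
      have := congrFun h j
      simp [hμ] at this
      omega
    have hlt : toLex μ < toLex x :=
      lt_of_le_of_ne (Pi.toLex_monotone hle) (fun h => hne (toLex.injective h))
    have hμΛ : μ ∈ Λ.1 := Λ.2.1 x hx μ hle
    have hμΛ' : μ ∈ Λ'.1 := (hmin μ hlt).mp hμΛ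
    set A := Λ.1.map (toLex : (Fin d → ℕ) ≃ Lex (Fin d → ℕ)).toEmbedding with hA
    set B := Λ'.1.map (toLex : (Fin d → ℕ) ≃ Lex (Fin d → ℕ)).toEmbedding with hB
    have hAcard : A.card = n := by rw [hA, Finset.card_map]; exact Λ.2.2
    have hBcard : B.card = n := by rw [hB, Finset.card_map]; exact Λ'.2.2
    have memA : ∀ a : Lex (Fin d → ℕ), a ∈ A ↔ ofLex a ∈ Λ.1 := fun a => Finset.mem_map_equiv
    have memB : ∀ a : Lex (Fin d → ℕ), a ∈ B ↔ ofLex a ∈ Λ'.1 := fun a => Finset.mem_map_equiv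
    set eA := A.orderIsoOfFin hAcard with heA
    set eB := B.orderIsoOfFin hBcard with heB
    have hμA : toLex μ ∈ A := (memA _).mpr hμΛ
    have hμB : toLex μ ∈ B := (memB _).mpr hμΛ'
    set iA : Fin n := eA.symm ⟨toLex μ, hμA⟩ with hiA
    set iB : Fin n := eB.symm ⟨toLex μ, hμB⟩ with hiB
    have heAiA : (eA iA : Lex (Fin d → ℕ)) = toLex μ := by rw [hiA, eA.apply_symm_apply]
    have heBiB : (eB iB : Lex (Fin d → ℕ)) = toLex μ := by rw [hiB, eB.apply_symm_apply]
    have hfilter : A.filter (fun a => a < toLex μ) = B.filter (fun a => a < toLex μ) := by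
      ext a
      simp only [Finset.mem_filter, memA, memB]
      have : ∀ (h : a < toLex μ), (ofLex a ∈ Λ.1 ↔ ofLex a ∈ Λ'.1) := by
        intro h
        exact hmin (ofLex a) (lt_trans h hlt)
      constructor
      · rintro ⟨h1, h2⟩; exact ⟨(this h2).mp h1, h2⟩
      · rintro ⟨h1, h2⟩; exact ⟨(this h2).mpr h1, h2⟩
    have hii : iA = iB := by
      have h1 := card_filter_lt_orderIso A hAcard iA
      have h2 := card_filter_lt_orderIso B hBcard iB
      rw [← heA] at h1
      rw [← heB] at h2
      rw [heAiA] at h1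
      rw [heBiB] at h2
      apply Fin.ext; rw [← h1, ← h2]
      convert congrArg Finset.card hfilter <;> rfl
    have hEij := congrFun (congrFun hE iA) j
    rw [hii] at hEij
    -- unfold enc
    have hEL : enc d n Λ iA j = decide (x ∈ Λ.1) := by
      have h0 : enc d n Λ iA j =
          decide ((ofLex ((eA iA : Lex (Fin d → ℕ))) + Pi.single j 1) ∈ Λ.1) := rfl
      rw [h0, heAiA, ofLex_toLex, hμx]
    have hER : enc d n Λ' iB j = decide (x ∈ Λ'.1) := by
      have h0 : enc d n Λ' iB j =
          decide ((ofLex ((eB iB : Lex (Fin d → ℕ))) + Pi.single j 1) ∈ Λ'.1) := rfl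
      rw [h0, heBiB, ofLex_toLex, hμx]
    rw [hii] at hEL
    rw [hEL, hER] at hEij
    have := (decide_eq_decide).mp hEij
    exact this.mp hx

lemma enc_injective : Function.Injective (enc d n) := by
  classical
  intro Λ Λ' hE
  apply Subtype.ext
  by_contra hne
  have hS : (symmDiff Λ.1 Λ'.1).Nonempty := by
    rw [Finset.nonempty_iff_ne_empty]
    intro h
    exact hne (symmDiff_eq_bot.mp h)
  set S : Finset (Lex (Fin d → ℕ)) :=
    (symmDiff Λ.1 Λ'.1).map (toLex : (Fin d → ℕ) ≃ Lex (Fin d → ℕ)).toEmbedding with hSdef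
  have hSne : S.Nonempty := hS.map
  set ν := S.min' hSne with hν
  have hνS : ν ∈ S := S.min'_mem hSne
  have hmin : ∀ y : Fin d → ℕ, toLex y < ν → (y ∈ Λ.1 ↔ y ∈ Λ'.1) := by
    intro y hy
    by_contra h
    have hy' : y ∈ symmDiff Λ.1 Λ'.1 := by
      rw [Finset.mem_symmDiff]
      tauto
    have : ν ≤ toLex y := S.min'_le _ (Finset.mem_map' _ |>.mpr hy')
    exact absurd hy (not_lt.mpr this)
  have hνmem : ofLex ν ∈ symmDiff Λ.1 Λ'.1 := Finset.mem_map_equiv.mp hνS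
  rw [Finset.mem_symmDiff] at hνmem
  have htl : toLex (ofLex ν) = ν := rfl
  rcases hνmem with ⟨h1, h2⟩ | ⟨h1, h2⟩
  · exact h2 (key Λ Λ' hE (ofLex ν) h1 (fun y hy => hmin y (htl ▸ hy)))
  · exact h2 (key Λ' Λ hE.symm (ofLex ν) h1 (fun y hy => (hmin y (htl ▸ hy)).symm))

end DCAux

/-- The number of downward closed subsets of `ℕ₀^d` of cardinality exactly `n`
is at most `2^(n d)`. -/
theorem card_downwardClosed_le_pow (d n : ℕ) :
    Nat.card {Λ : Finset (Fin d → ℕ) // DownwardClosed Λ ∧ Λ.card = n} ≤ 2 ^ (n * d) := by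
  calc Nat.card {Λ : Finset (Fin d → ℕ) // DownwardClosed Λ ∧ Λ.card = n}
      ≤ Nat.card (Fin n → Fin d → Bool) :=
        Nat.card_le_card_of_injective _ (DCAux.enc_injective (d := d) (n := n))
    _ = 2 ^ (n * d) := by
        simp [Nat.card_eq_fintype_card, Fintype.card_fun, ← pow_mul, mul_comm]
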